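/- Let $\F$ be a collection of finite $S$-colored posets whose Hasse diagrams are rooted trees, closed under taking convex sub-posets. For connected $a, b \in \F$ define $\delta_a \rhd \delta_b = \sum_{t} n(a,b,t)\, \delta_t$, where $n(a,b,t)$ counts edges $e$ of $t$ with $P_e(t) \cong a$ and $R_e(t) \cong b$ as colored rooted trees. Then the span of $\{\delta_t : t \in \F \text{ connected}\}$ inside the free vector space on all colored rooted trees is stable under this operation, and $\rhd$ satisfies the left pre-Lie identity on it. -/

import Mathlib

/-- An `S`-colored rooted tree on the vertex set `Fin (n+1)`, given by a parent
function (with root `0`, and each non-root vertex's parent strictly smaller, which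
makes the graph an acyclic rooted tree) together with a coloring of the vertices. -/
def PreTree (S : Type) (n : ℕ) : Type :=
  {pc : (Fin (n+1) → Fin (n+1)) × (Fin (n+1) → S) //
    pc.1 0 = 0 ∧ ∀ i, i ≠ 0 → pc.1 i < i}

instance (S : Type) (n : ℕ) [DecidableEq S] [Fintype S] : Fintype (PreTree S n) := by
  unfold PreTree; infer_instance

/-- `desc t v i` : `v` is an ancestor of `i` (or `i` itself), i.e. `i` lies in the
subtree below `v`; equivalently, `i` is separated from the root when the edge above
`v` is cut. -/
def desc {S : Type} {n : ℕ} (t : PreTree S n) (v i : Fin (n+1)) : Prop :=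
  ∃ k ∈ Finset.range (n+2), (t.1.1)^[k] i = v

instance {S : Type} {n : ℕ} (t : PreTree S n) (v i : Fin (n+1)) :
    Decidable (desc t v i) := by unfold desc; infer_instance

/-- `IsoBelow a t v` : the subtree `P_e(t)` of `t` hanging below the edge `e` above
`v` is isomorphic to `a` as an `S`-colored rooted tree. -/
def IsoBelow {S : Type} {p m : ℕ} (a : PreTree S p) (t : PreTree S m)
    (v : Fin (m+1)) : Prop :=
  ∃ f : Fin (p+1) → Fin (m+1),
    Function.Injective f ∧ f 0 = v ∧
    (∀ j, desc t v j ↔ ∃ i, f i = j) ∧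
    (∀ i, i ≠ 0 → t.1.1 (f i) = f (a.1.1 i)) ∧
    (∀ i, t.1.2 (f i) = a.1.2 i)

instance {S : Type} [DecidableEq S] {p m : ℕ} (a : PreTree S p) (t : PreTree S m)
    (v : Fin (m+1)) : Decidable (IsoBelow a t v) := by
  unfold IsoBelow; infer_instance

/-- `IsoAbove b t v` : the complementary component `R_e(t)` containing the root,
obtained by cutting the edge above `v`, is isomorphic to `b` as an `S`-colored
rooted tree. -/
def IsoAbove {S : Type} {q m : ℕ} (b : PreTree S q) (t : PreTree S m)
    (v : Fin (m+1)) : Prop :=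
  ∃ g : Fin (q+1) → Fin (m+1),
    Function.Injective g ∧ g 0 = 0 ∧
    (∀ j, ¬ desc t v j ↔ ∃ i, g i = j) ∧
    (∀ i, i ≠ 0 → t.1.1 (g i) = g (b.1.1 i)) ∧
    (∀ i, t.1.2 (g i) = b.1.2 i)

instance {S : Type} [DecidableEq S] {q m : ℕ} (b : PreTree S q) (t : PreTree S m)
    (v : Fin (m+1)) : Decidable (IsoAbove b t v) := by
  unfold IsoAbove; infer_instance

/-- `graftCount a b t = n(a,b,t)`: the number of edges `e` of `t` (identified with
their lower endpoints, the non-root vertices) such that `P_e(t) ≅ a` and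
`R_e(t) ≅ b` as `S`-colored rooted trees. -/
def graftCount {S : Type} [DecidableEq S] {p q m : ℕ}
    (a : PreTree S p) (b : PreTree S q) (t : PreTree S m) : ℕ :=
  (Finset.univ.filter fun v : Fin (m+1) =>
    v ≠ 0 ∧ IsoBelow a t v ∧ IsoAbove b t v).card

/-- Isomorphism of `S`-colored rooted trees on the same vertex set. -/
def treeRel {S : Type} {n : ℕ} (t t' : PreTree S n) : Prop :=
  ∃ e : Fin (n+1) ≃ Fin (n+1),
    e 0 = 0 ∧ (∀ i, i ≠ 0 → t'.1.1 (e i) = e (t.1.1 i)) ∧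
    (∀ i, t'.1.2 (e i) = t.1.2 i)

/-- Isomorphism classes of `S`-colored rooted trees with `n+1` vertices. -/
def TClass (S : Type) [Fintype S] [DecidableEq S] (n : ℕ) : Type :=
  Quot (@treeRel S n)

noncomputable instance (S : Type) [Fintype S] [DecidableEq S] (n : ℕ) :
    Fintype (TClass S n) :=
  letI : DecidableEq (TClass S n) := Classical.decEq _
  Fintype.ofSurjective (Quot.mk _) (fun q => Quot.exists_rep q)

open scoped BigOperators

section Aux
open Classical Function

variable {S : Type} {n : ℕ}

lemma parent_le (t : PreTree S n) (i : Fin (n+1)) : t.1.1 i ≤ i := by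
  by_cases h : i = 0
  · subst h; rw [t.2.1]
  · exact le_of_lt (t.2.2 i h)

lemma iter_le (t : PreTree S n) (k : ℕ) (i : Fin (n+1)) : (t.1.1)^[k] i ≤ i := by
  induction k generalizing i with
  | zero => simp
  | succ k ih =>
    rw [Function.iterate_succ_apply]
    exact le_trans (ih _) (parent_le t i)

lemma iter_zero (t : PreTree S n) (k : ℕ) : (t.1.1)^[k] 0 = 0 := by
  induction k with
  | zero => rfl
  | succ k ih => rw [Function.iterate_succ_apply, t.2.1, ih]

lemma iter_eq_zero (t : PreTree S n) : ∀ (k : ℕ) (i : Fin (n+1)), (i : ℕ) ≤ k →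
    (t.1.1)^[k] i = 0 := by
  intro k
  induction k with
  | zero =>
    intro i hi
    have : i = 0 := Fin.ext (by simp only [Fin.val_zero]; omega)
    simp [this]
  | succ k ih =>
    intro i hi
    by_cases h : i = 0
    · subst h; exact iter_zero t _
    · rw [Function.iterate_succ_apply]
      exact ih _ (by have := t.2.2 i h; omega)

lemma descIff (t : PreTree S n) (v i : Fin (n+1)) :
    desc t v i ↔ ∃ k : ℕ, (t.1.1)^[k] i = v := by
  constructor
  · rintro ⟨k, _, hk⟩; exact ⟨k, hk⟩
  · rintro ⟨k, hk⟩
    by_cases hv : v = 0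
    · subst hv
      exact ⟨n, Finset.mem_range.mpr (by omega), iter_eq_zero t n i (by omega)⟩
    · refine ⟨k, Finset.mem_range.mpr ?_, hk⟩
      by_contra hkk
      have h1 : (t.1.1)^[k] i = (t.1.1)^[k - n] ((t.1.1)^[n] i) := by
        rw [← Function.iterate_add_apply]
        congr 1
        omega
      rw [iter_eq_zero t n i (by omega), iter_zero] at h1
      exact hv (hk.symm.trans h1)

lemma desc_self (t : PreTree S n) (v : Fin (n+1)) : desc t v v :=
  (descIff t v v).mpr ⟨0, rfl⟩

lemma desc_zero (t : PreTree S n) (i : Fin (n+1)) : desc t 0 i :=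
  (descIff t 0 i).mpr ⟨n, iter_eq_zero t n i (by omega)⟩

lemma desc_trans {t : PreTree S n} {v u i : Fin (n+1)} (h1 : desc t v u)
    (h2 : desc t u i) : desc t v i := by
  rw [descIff] at *
  obtain ⟨k1, hk1⟩ := h1; obtain ⟨k2, hk2⟩ := h2
  exact ⟨k1 + k2, by rw [Function.iterate_add_apply, hk2, hk1]⟩

lemma desc_le {t : PreTree S n} {v i : Fin (n+1)} (h : desc t v i) : v ≤ i := by
  rw [descIff] at h; obtain ⟨k, hk⟩ := h; exact hk ▸ iter_le t k i

lemma desc_antisymm {t : PreTree S n} {v w : Fin (n+1)} (h1 : desc t v w)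
    (h2 : desc t w v) : v = w := le_antisymm (desc_le h1) (desc_le h2)

lemma desc_parent {t : PreTree S n} {v i : Fin (n+1)} (h : desc t v i) (hi : i ≠ v) :
    desc t v (t.1.1 i) := by
  rw [descIff] at *
  obtain ⟨k, hk⟩ := h
  match k, hk with
  | 0, hk => exact absurd hk hi
  | (k+1), hk => exact ⟨k, by rwa [Function.iterate_succ_apply] at hk⟩

lemma desc_of_parent {t : PreTree S n} {v i : Fin (n+1)} (h : desc t v (t.1.1 i)) :
    desc t v i := by
  rw [descIff] at *
  obtain ⟨k, hk⟩ := h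
  exact ⟨k + 1, by rwa [Function.iterate_succ_apply]⟩

lemma desc_zero_right {t : PreTree S n} {v : Fin (n+1)} (h : desc t v 0) : v = 0 := by
  rw [descIff] at h; obtain ⟨k, hk⟩ := h; rw [iter_zero] at hk; exact hk.symm

lemma desc_comparable {t : PreTree S n} {v w j : Fin (n+1)} (h1 : desc t v j)
    (h2 : desc t w j) : desc t v w ∨ desc t w v := by
  rw [descIff] at *
  obtain ⟨k1, hk1⟩ := h1; obtain ⟨k2, hk2⟩ := h2
  rcases le_or_gt k1 k2 with h | h
  · right
    refine (descIff t w v).mpr ⟨k2 - k1, ?_⟩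
    rw [← hk1, ← Function.iterate_add_apply]
    rw [show k2 - k1 + k1 = k2 by omega, hk2]
  · left
    refine ⟨k1 - k2, ?_⟩
    rw [← hk2, ← Function.iterate_add_apply]
    rw [show k1 - k2 + k2 = k1 by omega, hk1]

end Aux
section Aux2
open Classical Function

variable {S : Type}

/-- Generic "the sub-poset of `s` on the vertex set `E`, rooted at `v`, is
isomorphic to the pattern tree `x`". -/
def IsoOn {l m : ℕ} (x : PreTree S l) (s : PreTree S m) (v : Fin (m+1))
    (E : Fin (m+1) → Prop) : Prop :=
  ∃ h : Fin (l+1) → Fin (m+1),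
    Function.Injective h ∧ h 0 = v ∧
    (∀ j, E j ↔ ∃ i, h i = j) ∧
    (∀ i, i ≠ 0 → s.1.1 (h i) = h (x.1.1 i)) ∧
    (∀ i, s.1.2 (h i) = x.1.2 i)

lemma isoBelow_eq_isoOn {p m : ℕ} (a : PreTree S p) (t : PreTree S m) (v : Fin (m+1)) :
    IsoBelow a t v = IsoOn a t v (fun j => desc t v j) := rfl

lemma isoAbove_eq_isoOn {q m : ℕ} (b : PreTree S q) (t : PreTree S m) (v : Fin (m+1)) :
    IsoAbove b t v = IsoOn b t 0 (fun j => ¬ desc t v j) := rfl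

lemma isoOn_congr {l m : ℕ} (x : PreTree S l) (s : PreTree S m) (v : Fin (m+1))
    {E E' : Fin (m+1) → Prop} (hEE : ∀ j, E j ↔ E' j) :
    IsoOn x s v E ↔ IsoOn x s v E' := by
  unfold IsoOn
  constructor <;> rintro ⟨f, h1, h2, h3, h4, h5⟩ <;>
    refine ⟨f, h1, h2, fun j => ?_, h4, h5⟩
  · rw [← hEE j]; exact h3 j
  · rw [hEE j]; exact h3 j

lemma card_of_isoOn {l m : ℕ} {x : PreTree S l} {s : PreTree S m} {v : Fin (m+1)}
    {E : Fin (m+1) → Prop} [DecidablePred E] (h : IsoOn x s v E) :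
    (Finset.univ.filter fun j => E j).card = l + 1 := by
  obtain ⟨f, hinj, -, hrange, -, -⟩ := h
  rw [show l + 1 = (Finset.univ : Finset (Fin (l+1))).card by simp]
  apply Finset.card_bij (fun j _ => Classical.choose ((hrange j).mp (by
    simpa using (Finset.mem_filter.mp ‹_›).2)))
  · intros; exact Finset.mem_univ _
  · intro j1 hj1 j2 hj2 heq
    have e1 := Classical.choose_spec ((hrange j1).mp (by
      simpa using (Finset.mem_filter.mp hj1).2))
    have e2 := Classical.choose_spec ((hrange j2).mp (by
      simpa using (Finset.mem_filter.mp hj2).2))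
    rw [← e1, ← e2, heq]
  · intro i _
    refine ⟨f i, Finset.mem_filter.mpr ⟨Finset.mem_univ _, (hrange (f i)).mpr ⟨i, rfl⟩⟩, ?_⟩
    have e1 := Classical.choose_spec ((hrange (f i)).mp ((hrange (f i)).mpr ⟨i, rfl⟩))
    exact hinj e1

section Transport

variable {k m : ℕ} (t : PreTree S k) (s : PreTree S m)
  (f : Fin (k+1) → Fin (m+1)) (D : Fin (m+1) → Prop)
  (hfinj : Function.Injective f)
  (hD : ∀ j, D j ↔ ∃ i, f i = j)
  (hpar : ∀ i, i ≠ 0 → s.1.1 (f i) = f (t.1.1 i))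
  (hcol : ∀ i, s.1.2 (f i) = t.1.2 i)
  (hroot : ∀ u : Fin (k+1), u ≠ 0 → ¬ desc s (f u) (f 0))

include hpar in
lemma trans_desc_fwd {u i : Fin (k+1)} (hu : u ≠ 0) (h : desc t u i) :
    desc s (f u) (f i) := by
  have aux : ∀ (kk : ℕ) (i : Fin (k+1)), (t.1.1)^[kk] i = u →
      (s.1.1)^[kk] (f i) = f u := by
    intro kk
    induction kk with
    | zero => intro i hkk; simp_all
    | succ kk ih =>
      intro i hkk
      have hi : i ≠ 0 := by
        intro h0
        have hd : desc t u i := (descIff t u i).mpr ⟨kk+1, hkk⟩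
        exact hu (le_antisymm (h0 ▸ desc_le hd) (Fin.zero_le u))
      rw [Function.iterate_succ_apply] at hkk ⊢
      rw [hpar i hi]
      exact ih _ hkk
  rw [descIff] at h ⊢
  obtain ⟨kk, hkk⟩ := h
  exact ⟨kk, aux kk i hkk⟩

include hfinj hpar hroot in
lemma trans_desc_bwd {u i : Fin (k+1)} (hu : u ≠ 0) (h : desc s (f u) (f i)) :
    desc t u i := by
  have aux : ∀ (kk : ℕ) (i : Fin (k+1)), (s.1.1)^[kk] (f i) = f u → desc t u i := by
    intro kk
    induction kk with
    | zero => intro i hkk; cases hfinj hkk; exact desc_self t u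
    | succ kk ih =>
      intro i hkk
      by_cases hiu : i = u
      · subst hiu; exact desc_self t i
      by_cases hi0 : i = 0
      · exact absurd ((descIff s (f u) (f 0)).mpr ⟨kk+1, hi0 ▸ hkk⟩) (hroot u hu)
      · rw [Function.iterate_succ_apply, hpar i hi0] at hkk
        exact desc_of_parent (ih _ hkk)
  rw [descIff] at h
  obtain ⟨kk, hkk⟩ := h
  exact aux kk i hkk

include hfinj hD hpar hroot in
lemma trans_below {u : Fin (k+1)} (hu : u ≠ 0) (j : Fin (m+1)) :
    (∃ i, f i = j ∧ desc t u i) ↔ (desc s (f u) j ∧ D j) := by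
  constructor
  · rintro ⟨i, rfl, hd⟩
    exact ⟨trans_desc_fwd t s f hpar hu hd, (hD _).mpr ⟨i, rfl⟩⟩
  · rintro ⟨hd, hDj⟩
    obtain ⟨i, rfl⟩ := (hD j).mp hDj
    exact ⟨i, rfl, trans_desc_bwd t s f hfinj hpar hroot hu hd⟩

include hfinj hD hpar hroot in
lemma trans_above {u : Fin (k+1)} (hu : u ≠ 0) (j : Fin (m+1)) :
    (∃ i, f i = j ∧ ¬ desc t u i) ↔ (¬ desc s (f u) j ∧ D j) := by
  constructor
  · rintro ⟨i, rfl, hd⟩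
    exact ⟨fun hh => hd (trans_desc_bwd t s f hfinj hpar hroot hu hh), (hD _).mpr ⟨i, rfl⟩⟩
  · rintro ⟨hd, hDj⟩
    obtain ⟨i, rfl⟩ := (hD j).mp hDj
    exact ⟨i, rfl, fun hh => hd (trans_desc_fwd t s f hpar hu hh)⟩

include hfinj hD hpar hcol in
lemma trans_isoOn {l : ℕ} (x : PreTree S l) (r : Fin (k+1)) (E : Fin (k+1) → Prop)
    (hE0 : E 0 → r = 0) :
    IsoOn x t r E ↔ IsoOn x s (f r) (fun j => ∃ i, f i = j ∧ E i) := by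
  constructor
  · rintro ⟨h, hinj, h0, hrange, hp, hc⟩
    refine ⟨f ∘ h, hfinj.comp hinj, by simp [h0], fun j => ?_, fun i hi => ?_, fun i => ?_⟩
    · constructor
      · rintro ⟨i, rfl, hEi⟩
        obtain ⟨i', rfl⟩ := (hrange i).mp hEi
        exact ⟨i', rfl⟩
      · rintro ⟨i', rfl⟩
        exact ⟨h i', rfl, (hrange (h i')).mpr ⟨i', rfl⟩⟩
    · have hne : h i ≠ 0 := by
        intro h0'
        have hE0' : E 0 := (hrange 0).mpr ⟨i, h0'⟩
        have : h i = h 0 := by rw [h0', h0, hE0 hE0']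
        exact hi (hinj this)
      simp only [Function.comp_apply]
      rw [hpar (h i) hne, hp i hi]
    · simp only [Function.comp_apply]
      rw [hcol (h i), hc i]
  · rintro ⟨H, hinj, H0, hrange, hp, hc⟩
    have hmem : ∀ i, ∃ i', f i' = H i ∧ E i' := fun i => (hrange (H i)).mpr ⟨i, rfl⟩
    choose g hg hEg using hmem
    have hg0 : g 0 = r := hfinj (by rw [hg, H0])
    have hgne : ∀ i, i ≠ 0 → g i ≠ 0 := by
      intro i hi h0'
      have hE0' : E 0 := h0' ▸ hEg i
      have : H i = H 0 := by rw [← hg, ← hg 0, h0', hg0, hE0 hE0']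
      exact hi (hinj this)
    refine ⟨g, fun i i' hii => hinj (by rw [← hg, ← hg, hii]), hg0, fun i' => ?_,
      fun i hi => ?_, fun i => ?_⟩
    · constructor
      · intro hE
        obtain ⟨i, hi⟩ := (hrange (f i')).mp ⟨i', rfl, hE⟩
        exact ⟨i, hfinj (by rw [hg, hi])⟩
      · rintro ⟨i, rfl⟩; exact hEg i
    · apply hfinj
      rw [← hpar (g i) (hgne i hi), hg, hg, hp i hi]
    · rw [← hcol (g i), hg, hc i]

include hfinj hD hpar hcol hroot in
lemma cor_below {l : ℕ} (x : PreTree S l) {u : Fin (k+1)} (hu : u ≠ 0) :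
    IsoBelow x t u ↔ IsoOn x s (f u) (fun j => desc s (f u) j ∧ D j) := by
  rw [isoBelow_eq_isoOn,
    trans_isoOn t s f D hfinj hD hpar hcol x u (fun j => desc t u j)
      (fun h0 => le_antisymm (desc_le h0) (Fin.zero_le u))]
  exact isoOn_congr _ _ _ (fun j => trans_below t s f D hfinj hD hpar hroot hu j)

include hfinj hD hpar hcol hroot in
lemma cor_above {l : ℕ} (x : PreTree S l) {u : Fin (k+1)} (hu : u ≠ 0) :
    IsoAbove x t u ↔ IsoOn x s (f 0) (fun j => ¬ desc s (f u) j ∧ D j) := by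
  rw [isoAbove_eq_isoOn,
    trans_isoOn t s f D hfinj hD hpar hcol x 0 (fun j => ¬ desc t u j) (fun _ => rfl)]
  exact isoOn_congr _ _ _ (fun j => trans_above t s f D hfinj hD hpar hroot hu j)

end Transport
end Aux2
section Aux3
open Classical Function

variable {S : Type}

lemma treeRel_refl {n : ℕ} (t : PreTree S n) : treeRel t t :=
  ⟨Equiv.refl _, rfl, fun _ _ => rfl, fun _ => rfl⟩

lemma treeRel_symm {n : ℕ} {t t' : PreTree S n} (h : treeRel t t') : treeRel t' t := by
  obtain ⟨e, h0, hp, hc⟩ := h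
  refine ⟨e.symm, e.symm_apply_eq.mpr h0.symm, fun i hi => ?_, fun i => ?_⟩
  · have hi' : e.symm i ≠ 0 := by
      intro hh; apply hi; rw [← e.apply_symm_apply i, hh, h0]
    have := hp (e.symm i) hi'
    rw [e.apply_symm_apply] at this
    rw [this, e.symm_apply_apply]
  · have := hc (e.symm i)
    rw [e.apply_symm_apply] at this
    exact this.symm

lemma treeRel_trans {n : ℕ} {t t' t'' : PreTree S n} (h1 : treeRel t t')
    (h2 : treeRel t' t'') : treeRel t t'' := by
  obtain ⟨e, h0, hp, hc⟩ := h1; obtain ⟨e', h0', hp', hc'⟩ := h2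
  refine ⟨e.trans e', by simp [Equiv.trans_apply, h0, h0'], fun i hi => ?_, fun i => ?_⟩
  · simp only [Equiv.trans_apply]
    have hei : e i ≠ 0 := fun hh => hi (e.injective (hh.trans h0.symm))
    rw [hp' (e i) hei, hp i hi]
  · simp only [Equiv.trans_apply]; rw [hc' (e i), hc i]

lemma treeRel_equivalence {n : ℕ} : Equivalence (@treeRel S n) :=
  ⟨treeRel_refl, treeRel_symm, treeRel_trans⟩

lemma rel_of_quot_eq {n : ℕ} {t t' : PreTree S n}
    (h : Quot.mk treeRel t = Quot.mk treeRel t') : treeRel t t' :=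
  (treeRel_equivalence.eqvGen_iff).mp (Quot.eqvGen_exact h)

/-- Uniqueness: two pattern trees embedded onto the same vertex set with the same
root are isomorphic. -/
lemma rel_of_same {k m : ℕ} {t t' : PreTree S k} {s : PreTree S m}
    {f f' : Fin (k+1) → Fin (m+1)} {D : Fin (m+1) → Prop}
    (hfinj : Injective f) (hD : ∀ j, D j ↔ ∃ i, f i = j)
    (hpar : ∀ i, i ≠ 0 → s.1.1 (f i) = f (t.1.1 i))
    (hcol : ∀ i, s.1.2 (f i) = t.1.2 i)
    (hfinj' : Injective f') (hD' : ∀ j, D j ↔ ∃ i, f' i = j)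
    (hpar' : ∀ i, i ≠ 0 → s.1.1 (f' i) = f' (t'.1.1 i))
    (hcol' : ∀ i, s.1.2 (f' i) = t'.1.2 i)
    (h00 : f 0 = f' 0) : treeRel t t' := by
  have hmem : ∀ i, ∃ i', f' i' = f i := fun i => (hD' (f i)).mp ((hD (f i)).mpr ⟨i, rfl⟩)
  choose e0 he0 using hmem
  have he0inj : Injective e0 := fun i i' hh => hfinj (by rw [← he0, ← he0, hh])
  have hbij : Bijective e0 := Finite.injective_iff_bijective.mp he0inj
  have he00 : e0 0 = 0 := hfinj' (by rw [he0, h00])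
  refine ⟨Equiv.ofBijective e0 hbij, he00, fun i hi => ?_, fun i => ?_⟩
  · show t'.1.1 (e0 i) = e0 (t.1.1 i)
    have hne : e0 i ≠ 0 := fun hh => hi (he0inj (hh.trans he00.symm))
    apply hfinj'
    rw [← hpar' (e0 i) hne, he0, he0, hpar i hi]
  · show t'.1.2 (e0 i) = t.1.2 i
    rw [← hcol' (e0 i), he0]
    exact hcol i

/-- `IsoOn` only depends on the pattern tree up to isomorphism. -/
lemma isoOn_of_rel {l m : ℕ} {x x' : PreTree S l} {s : PreTree S m} {v : Fin (m+1)}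
    {E : Fin (m+1) → Prop} (hrel : treeRel x x') (h : IsoOn x s v E) :
    IsoOn x' s v E := by
  obtain ⟨e, h0, hp, hc⟩ := hrel
  obtain ⟨f, hinj, hf0, hrange, hpar, hcol⟩ := h
  have hs0 : e.symm 0 = 0 := e.symm_apply_eq.mpr h0.symm
  refine ⟨f ∘ e.symm, hinj.comp e.symm.injective, by simp [hs0, hf0], fun j => ?_,
    fun i hi => ?_, fun i => ?_⟩
  · rw [hrange j]
    constructor
    · rintro ⟨i, rfl⟩; exact ⟨e i, by simp⟩
    · rintro ⟨i, rfl⟩; exact ⟨e.symm i, rfl⟩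
  · have hne : e.symm i ≠ 0 := by
      intro hh; apply hi; rw [← e.apply_symm_apply i, hh, h0]
    simp only [Function.comp_apply]
    rw [hpar (e.symm i) hne]
    congr 1
    have := hp (e.symm i) hne
    rw [e.apply_symm_apply] at this
    rw [this, e.symm_apply_apply]
  · simp only [Function.comp_apply]
    rw [hcol (e.symm i)]
    have := hc (e.symm i)
    rw [e.apply_symm_apply] at this
    exact this.symm

lemma isoBelow_of_rel {p m : ℕ} {a a' : PreTree S p} {t : PreTree S m} {v : Fin (m+1)}
    (hrel : treeRel a a') (h : IsoBelow a t v) : IsoBelow a' t v :=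
  isoOn_of_rel hrel h

lemma isoAbove_of_rel {q m : ℕ} {b b' : PreTree S q} {t : PreTree S m} {v : Fin (m+1)}
    (hrel : treeRel b b') (h : IsoAbove b t v) : IsoAbove b' t v :=
  isoOn_of_rel hrel h

/-- `graftCount` only depends on the ambient tree up to isomorphism. -/
lemma graftCount_rel {p q k : ℕ} [DecidableEq S] (a : PreTree S p) (b : PreTree S q)
    {T T' : PreTree S k} (hrel : treeRel T T') :
    graftCount a b T = graftCount a b T' := by
  obtain ⟨e, h0, hp, hc⟩ := hrel
  have hD : ∀ j : Fin (k+1), (∃ i, e i = j) ↔ ∃ i, e i = j := fun _ => Iff.rfl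
  have hroot : ∀ u : Fin (k+1), u ≠ 0 → ¬ desc T' (e u) (e 0) := by
    intro u hu hd
    rw [h0] at hd
    exact hu (e.injective ((desc_zero_right hd).trans h0.symm))
  have hbel : ∀ u : Fin (k+1), u ≠ 0 → (IsoBelow a T u ↔ IsoBelow a T' (e u)) := by
    intro u hu
    rw [cor_below T T' e _ e.injective hD hp hc hroot a hu, isoBelow_eq_isoOn]
    exact isoOn_congr _ _ _ (fun j => by simp [e.surjective j])
  have habv : ∀ u : Fin (k+1), u ≠ 0 → (IsoAbove b T u ↔ IsoAbove b T' (e u)) := by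
    intro u hu
    rw [cor_above T T' e _ e.injective hD hp hc hroot b hu, isoAbove_eq_isoOn, h0]
    exact isoOn_congr _ _ _ (fun j => by simp [e.surjective j])
  have hne : ∀ u : Fin (k+1), u ≠ 0 ↔ e u ≠ 0 := by
    intro u
    exact not_congr ⟨fun hh => by rw [hh, h0], fun hh => e.injective (by rw [hh, h0])⟩
  unfold graftCount
  apply Finset.card_bij (fun u _ => e u)
  · intro u hu
    rw [Finset.mem_filter] at hu ⊢
    obtain ⟨-, h1, h2, h3⟩ := hu
    exact ⟨Finset.mem_univ _, (hne u).mp h1, (hbel u h1).mp h2, (habv u h1).mp h3⟩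
  · intro u _ u' _ hh; exact e.injective hh
  · intro u' hu'
    rw [Finset.mem_filter] at hu'
    obtain ⟨-, h1, h2, h3⟩ := hu'
    have hu : e.symm u' ≠ 0 := by
      intro hh; apply h1; rw [← e.apply_symm_apply u', hh, h0]
    refine ⟨e.symm u', Finset.mem_filter.mpr ⟨Finset.mem_univ _, hu, ?_, ?_⟩, by simp⟩
    · rw [hbel _ hu, e.apply_symm_apply]; exact h2
    · rw [habv _ hu, e.apply_symm_apply]; exact h3

end Aux3
section Aux4
open Classical Function

variable {S : Type}

/-- Bundle a suitable subset `C` of vertices of `s` into an abstract `PreTree`. -/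
lemma exists_pattern {m : ℕ} (s : PreTree S m) (C : Finset (Fin (m+1))) (k : ℕ)
    (hcard : C.card = k + 1) (v : Fin (m+1)) (hv : v ∈ C)
    (hmin : ∀ x ∈ C, v ≤ x)
    (hcl : ∀ x ∈ C, x ≠ v → s.1.1 x ∈ C)
    (h0 : ∀ x ∈ C, x ≠ v → x ≠ 0) :
    ∃ (T : PreTree S k) (f : Fin (k+1) → Fin (m+1)), Function.Injective f ∧ f 0 = v ∧
      (∀ j, j ∈ C ↔ ∃ i, f i = j) ∧ (∀ i, i ≠ 0 → s.1.1 (f i) = f (T.1.1 i)) ∧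
      (∀ i, s.1.2 (f i) = T.1.2 i) := by
  let o := C.orderIsoOfFin hcard
  have hmem : ∀ i, (o i : Fin (m+1)) ∈ C := fun i => (o i).2
  have ho0 : (o 0 : Fin (m+1)) = v := by
    refine le_antisymm ?_ (hmin _ (hmem 0))
    have h1 : o (o.symm ⟨v, hv⟩) = ⟨v, hv⟩ := o.apply_symm_apply _
    have h2 : o 0 ≤ o (o.symm ⟨v, hv⟩) := o.monotone (Fin.zero_le _)
    rw [h1] at h2
    exact_mod_cast h2
  have hne : ∀ i : Fin (k+1), i ≠ 0 → (o i : Fin (m+1)) ≠ v := by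
    intro i hi hh
    exact hi (o.injective (Subtype.ext (hh.trans ho0.symm)))
  have hnz : ∀ i : Fin (k+1), i ≠ 0 → (o i : Fin (m+1)) ≠ 0 :=
    fun i hi => h0 _ (hmem i) (hne i hi)
  let par : Fin (k+1) → Fin (k+1) := fun i =>
    if h : i = 0 then 0 else o.symm ⟨s.1.1 (o i), hcl _ (hmem i) (hne i h)⟩
  have hdec : ∀ i, i ≠ 0 → par i < i := by
    intro i hi
    have hlt : s.1.1 ((o i : Fin (m+1))) < (o i : Fin (m+1)) := s.2.2 _ (hnz i hi)
    have hpe : par i = o.symm ⟨s.1.1 (o i), hcl _ (hmem i) (hne i hi)⟩ := dif_neg hi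
    rw [hpe]
    have h2 : (⟨s.1.1 (o i), hcl _ (hmem i) (hne i hi)⟩ : C) < o i := hlt
    have h3 := o.symm.strictMono h2
    rwa [o.symm_apply_apply] at h3
  have hpar0 : par 0 = 0 := dif_pos rfl
  refine ⟨⟨(par, fun i => s.1.2 (o i)), hpar0, hdec⟩, fun i => (o i : Fin (m+1)),
    fun i i' hii => o.injective (Subtype.ext hii), ho0, fun j => ?_, fun i hi => ?_,
    fun i => rfl⟩
  · constructor
    · intro hj
      refine ⟨o.symm ⟨j, hj⟩, ?_⟩
      show ((o (o.symm ⟨j, hj⟩) : C) : Fin (m+1)) = j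
      rw [o.apply_symm_apply]
    · rintro ⟨i, rfl⟩; exact hmem i
  · show s.1.1 ((o i : Fin (m+1))) = (o (par i) : Fin (m+1))
    have hpe : par i = o.symm ⟨s.1.1 (o i), hcl _ (hmem i) (hne i hi)⟩ := dif_neg hi
    rw [hpe, o.apply_symm_apply]

end Aux4

section Aux5
open Classical Function

lemma key_sum {S : Type} [Fintype S] [DecidableEq S] (F : ∀ m : ℕ, PreTree S m → Prop)
    (hIso : ∀ (m : ℕ) (t t' : PreTree S m), treeRel t t' → F m t → F m t')
    {k : ℕ} (ISO : PreTree S k → Prop) [DecidablePred fun T : PreTree S k => F k T ∧ ISO T]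
    (gcf : PreTree S k → ℕ) (N : ℕ)
    (huniq : ∀ T T', ISO T → ISO T' → treeRel T T')
    (hinv : ∀ T T', treeRel T T' → ISO T → ISO T')
    (hgc : ∀ T, ISO T → gcf T = N)
    (hex : 0 < N → ∃ T, F k T ∧ ISO T) :
    ∑ T : TClass S k, (if F k T.out ∧ ISO T.out then gcf T.out else 0) = N := by
  by_cases hN : N = 0
  · subst hN
    apply Finset.sum_eq_zero
    intro T _
    split_ifs with h
    · exact hgc _ h.2
    · rfl
  · obtain ⟨T₀, hF₀, hI₀⟩ := hex (Nat.pos_of_ne_zero hN)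
    have hrel₀ : treeRel T₀ (Quot.mk treeRel T₀ : TClass S k).out :=
      rel_of_quot_eq (Quot.out_eq _).symm
    have hmain := Finset.sum_eq_single_of_mem (s := (Finset.univ : Finset (TClass S k)))
      (f := fun T : TClass S k => if F k T.out ∧ ISO T.out then gcf T.out else 0)
      (Quot.mk treeRel T₀ : TClass S k) (Finset.mem_univ _) ?side
    case side =>
      intro T _ hT
      show (if F k T.out ∧ ISO T.out then gcf T.out else 0) = 0
      rw [if_neg]
      rintro ⟨hFT, hIT⟩
      apply hT
      exact (Quot.out_eq T).symm.trans (Quot.sound (huniq _ _ hIT hI₀))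
    rw [hmain]
    show (if F k (Quot.mk treeRel T₀ : TClass S k).out ∧ ISO (Quot.mk treeRel T₀ : TClass S k).out
      then gcf (Quot.mk treeRel T₀ : TClass S k).out else 0) = N
    rw [if_pos ⟨hIso k T₀ _ hrel₀ hF₀, hinv _ _ hrel₀ hI₀⟩]
    exact hgc _ (hinv _ _ hrel₀ hI₀)

end Aux5
section Main
open Classical Function Finset

variable {S : Type}

/-- The middle piece: sub-poset of `s` strictly between `w` and `v` (inclusive of
`v`, exclusive of the subtree below `w`) is isomorphic to `b`. -/
def MidIso {q m : ℕ} (b : PreTree S q) (s : PreTree S m) (v w : Fin (m+1)) : Prop :=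
  IsoOn b s v (fun j => desc s v j ∧ ¬ desc s w j)

/-- The outer piece: complement of the two subtrees below `v` and `w`. -/
def OutIso {r m : ℕ} (c : PreTree S r) (s : PreTree S m) (v w : Fin (m+1)) : Prop :=
  IsoOn c s 0 (fun j => ¬ desc s v j ∧ ¬ desc s w j)

lemma transA [DecidableEq S] {m p q k : ℕ} (s : PreTree S m) (a : PreTree S p)
    (b : PreTree S q) {v : Fin (m+1)} (hv : v ≠ 0) (T : PreTree S k)
    (hT : IsoBelow T s v) :
    graftCount a b T = (Finset.univ.filter fun w =>
      w ≠ 0 ∧ w ≠ v ∧ desc s v w ∧ IsoBelow a s w ∧ MidIso b s v w).card := by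
  obtain ⟨f, hfinj, hf0, hrange, hpar, hcol⟩ := hT
  have hdes : ∀ u : Fin (k+1), desc s v (f u) := fun u => (hrange (f u)).mpr ⟨u, rfl⟩
  have hroot : ∀ u : Fin (k+1), u ≠ 0 → ¬ desc s (f u) (f 0) := by
    intro u hu hd
    rw [hf0] at hd
    exact hu (hfinj ((desc_antisymm hd (hdes u)).trans hf0.symm))
  have hbel : ∀ u : Fin (k+1), u ≠ 0 → (IsoBelow a T u ↔ IsoBelow a s (f u)) := by
    intro u hu
    rw [cor_below T s f (fun j => desc s v j) hfinj hrange hpar hcol hroot a hu,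
      isoBelow_eq_isoOn]
    exact isoOn_congr _ _ _ (fun j =>
      ⟨fun h => h.1, fun h => ⟨h, desc_trans (hdes u) h⟩⟩)
  have habv : ∀ u : Fin (k+1), u ≠ 0 → (IsoAbove b T u ↔ MidIso b s v (f u)) := by
    intro u hu
    rw [cor_above T s f (fun j => desc s v j) hfinj hrange hpar hcol hroot b hu, hf0]
    exact isoOn_congr _ _ _ (fun j => and_comm)
  unfold graftCount
  apply Finset.card_bij (fun u _ => f u)
  · intro u hu
    rw [Finset.mem_filter] at hu ⊢
    obtain ⟨-, h1, h2, h3⟩ := hu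
    refine ⟨Finset.mem_univ _, ?_, ?_, hdes u, (hbel u h1).mp h2, (habv u h1).mp h3⟩
    · intro hh
      exact hv (le_antisymm (hh ▸ desc_le (hdes u)) (Fin.zero_le v))
    · intro hh
      exact h1 (hfinj (hh.trans hf0.symm))
  · intro u _ u' _ hh; exact hfinj hh
  · intro w hw
    rw [Finset.mem_filter] at hw
    obtain ⟨-, h1, h2, h3, h4, h5⟩ := hw
    obtain ⟨u, rfl⟩ := (hrange w).mp h3
    have hu : u ≠ 0 := fun hh => h2 (by rw [hh, hf0])
    exact ⟨u, Finset.mem_filter.mpr ⟨Finset.mem_univ _, hu, (hbel u hu).mpr h4,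
      (habv u hu).mpr h5⟩, rfl⟩

lemma transB [DecidableEq S] {m q r k : ℕ} (s : PreTree S m) (b : PreTree S q)
    (c : PreTree S r) {w : Fin (m+1)} (hw : w ≠ 0) (T : PreTree S k)
    (hT : IsoAbove T s w) :
    graftCount b c T = (Finset.univ.filter fun v =>
      v ≠ 0 ∧ ¬ desc s w v ∧ MidIso b s v w ∧ OutIso c s v w).card := by
  obtain ⟨g, hginj, hg0, hrange, hpar, hcol⟩ := hT
  have hout : ∀ u : Fin (k+1), ¬ desc s w (g u) := fun u => by
    have := (hrange (g u)).mpr ⟨u, rfl⟩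
    exact this
  have hroot : ∀ u : Fin (k+1), u ≠ 0 → ¬ desc s (g u) (g 0) := by
    intro u hu hd
    rw [hg0] at hd
    exact hu (hginj ((desc_zero_right hd).trans hg0.symm))
  have hbel : ∀ u : Fin (k+1), u ≠ 0 → (IsoBelow b T u ↔ MidIso b s (g u) w) := by
    intro u hu
    rw [cor_below T s g (fun j => ¬ desc s w j) hginj hrange hpar hcol hroot b hu]
    exact isoOn_congr _ _ _ (fun j => Iff.rfl)
  have habv : ∀ u : Fin (k+1), u ≠ 0 → (IsoAbove c T u ↔ OutIso c s (g u) w) := by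
    intro u hu
    rw [cor_above T s g (fun j => ¬ desc s w j) hginj hrange hpar hcol hroot c hu, hg0]
    exact isoOn_congr _ _ _ (fun j => Iff.rfl)
  unfold graftCount
  apply Finset.card_bij (fun u _ => g u)
  · intro u hu
    rw [Finset.mem_filter] at hu ⊢
    obtain ⟨-, h1, h2, h3⟩ := hu
    refine ⟨Finset.mem_univ _, ?_, hout u, (hbel u h1).mp h2, (habv u h1).mp h3⟩
    intro hh
    exact h1 (hginj (hh.trans hg0.symm))
  · intro u _ u' _ hh; exact hginj hh
  · intro v hv
    rw [Finset.mem_filter] at hv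
    obtain ⟨-, h1, h2, h3, h4⟩ := hv
    obtain ⟨u, rfl⟩ := (hrange v).mp h2
    have hu : u ≠ 0 := fun hh => h1 (by rw [hh, hg0])
    exact ⟨u, Finset.mem_filter.mpr ⟨Finset.mem_univ _, hu, (hbel u hu).mpr h3,
      (habv u hu).mpr h4⟩, rfl⟩

lemma exA {m p q k : ℕ} (hk : k + 1 = (p + 1) + (q + 1))
    (F : ∀ n : ℕ, PreTree S n → Prop)
    (hBelow : ∀ (n : ℕ) (t : PreTree S n), F n t → ∀ (p' : ℕ) (a' : PreTree S p')
      (v : Fin (n+1)), v ≠ 0 → IsoBelow a' t v → F p' a')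
    (s : PreTree S m) (hs : F m s) (a : PreTree S p) (b : PreTree S q)
    {v w : Fin (m+1)} (hv : v ≠ 0) (hd : desc s v w)
    (hba : IsoBelow a s w) (hmb : MidIso b s v w) :
    ∃ T : PreTree S k, F k T ∧ IsoBelow T s v := by
  have hcard : (Finset.univ.filter fun j => desc s v j).card = k + 1 := by
    have h1 : (Finset.univ.filter fun j => desc s w j).card = p + 1 := card_of_isoOn hba
    have h2 : (Finset.univ.filter fun j => desc s v j ∧ ¬ desc s w j).card = q + 1 :=
      card_of_isoOn hmb
    have hun : (Finset.univ.filter fun j => desc s v j)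
        = (Finset.univ.filter fun j => desc s w j)
          ∪ (Finset.univ.filter fun j => desc s v j ∧ ¬ desc s w j) := by
      ext j
      simp only [Finset.mem_filter, Finset.mem_union, Finset.mem_univ, true_and]
      constructor
      · intro h
        by_cases hh : desc s w j
        · exact Or.inl hh
        · exact Or.inr ⟨h, hh⟩
      · rintro (h | h)
        · exact desc_trans hd h
        · exact h.1
    have hdisj : Disjoint (Finset.univ.filter fun j => desc s w j)
        (Finset.univ.filter fun j => desc s v j ∧ ¬ desc s w j) := by
      rw [Finset.disjoint_left]
      intro j hj1 hj2
      rw [Finset.mem_filter] at hj1 hj2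
      exact hj2.2.2 hj1.2
    rw [hun, Finset.card_union_of_disjoint hdisj, h1, h2, ← hk]
  obtain ⟨T, f, h1, h2, h3, h4, h5⟩ := exists_pattern s _ k hcard v
    (by rw [Finset.mem_filter]; exact ⟨Finset.mem_univ _, desc_self s v⟩)
    (fun x hx => desc_le (Finset.mem_filter.mp hx).2)
    (fun x hx hne => by
      rw [Finset.mem_filter] at hx ⊢
      exact ⟨Finset.mem_univ _, desc_parent hx.2 hne⟩)
    (fun x hx hne h0eq => hv (desc_zero_right (h0eq ▸ (Finset.mem_filter.mp hx).2)))
  have hIB : IsoBelow T s v := ⟨f, h1, h2,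
    fun j => Iff.trans (by simp [Finset.mem_filter]) (h3 j), h4, h5⟩
  exact ⟨T, hBelow m s hs k T v hv hIB, hIB⟩

lemma exB {m q r k : ℕ} (hk : k + 1 = (q + 1) + (r + 1))
    (F : ∀ n : ℕ, PreTree S n → Prop)
    (hAbove : ∀ (n : ℕ) (t : PreTree S n), F n t → ∀ (q' : ℕ) (b' : PreTree S q')
      (v : Fin (n+1)), v ≠ 0 → IsoAbove b' t v → F q' b')
    (s : PreTree S m) (hs : F m s) (b : PreTree S q) (c : PreTree S r)
    {v w : Fin (m+1)} (hw : w ≠ 0)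
    (hmb : MidIso b s v w) (hoc : OutIso c s v w) :
    ∃ T : PreTree S k, F k T ∧ IsoAbove T s w := by
  have hcard : (Finset.univ.filter fun j => ¬ desc s w j).card = k + 1 := by
    have h2 : (Finset.univ.filter fun j => desc s v j ∧ ¬ desc s w j).card = q + 1 :=
      card_of_isoOn hmb
    have h3 : (Finset.univ.filter fun j => ¬ desc s v j ∧ ¬ desc s w j).card = r + 1 :=
      card_of_isoOn hoc
    have hun : (Finset.univ.filter fun j => ¬ desc s w j)
        = (Finset.univ.filter fun j => desc s v j ∧ ¬ desc s w j)
          ∪ (Finset.univ.filter fun j => ¬ desc s v j ∧ ¬ desc s w j) := by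
      ext j
      simp only [Finset.mem_filter, Finset.mem_union, Finset.mem_univ, true_and]
      constructor
      · intro h
        by_cases hh : desc s v j
        · exact Or.inl ⟨hh, h⟩
        · exact Or.inr ⟨hh, h⟩
      · rintro (h | h) <;> exact h.2
    have hdisj : Disjoint (Finset.univ.filter fun j => desc s v j ∧ ¬ desc s w j)
        (Finset.univ.filter fun j => ¬ desc s v j ∧ ¬ desc s w j) := by
      rw [Finset.disjoint_left]
      intro j hj1 hj2
      rw [Finset.mem_filter] at hj1 hj2
      exact hj2.2.1 hj1.2.1
    rw [hun, Finset.card_union_of_disjoint hdisj, h2, h3, ← hk]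
  obtain ⟨T, f, h1, h2, h3, h4, h5⟩ := exists_pattern s _ k hcard 0
    (by
      rw [Finset.mem_filter]
      exact ⟨Finset.mem_univ _, fun hh => hw (desc_zero_right hh)⟩)
    (fun x _ => Fin.zero_le x)
    (fun x hx hne => by
      rw [Finset.mem_filter] at hx ⊢
      exact ⟨Finset.mem_univ _, fun hh => hx.2 (desc_of_parent hh)⟩)
    (fun x _ hne => hne)
  have hIA : IsoAbove T s w := ⟨f, h1, h2,
    fun j => Iff.trans (by simp [Finset.mem_filter]) (h3 j), h4, h5⟩
  exact ⟨T, hAbove m s hs k T w hw hIA, hIA⟩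

end Main
section Claims
open Classical Function Finset

variable {S : Type} [Fintype S] [DecidableEq S]

lemma claimA {m p q r k : ℕ} (hk : k + 1 = (p + 1) + (q + 1))
    (F : ∀ n : ℕ, PreTree S n → Prop)
    (hIso : ∀ (n : ℕ) (t t' : PreTree S n), treeRel t t' → F n t → F n t')
    (hBelow : ∀ (n : ℕ) (t : PreTree S n), F n t → ∀ (p' : ℕ) (a' : PreTree S p')
      (v : Fin (n+1)), v ≠ 0 → IsoBelow a' t v → F p' a')
    (s : PreTree S m) (hs : F m s)
    (a : PreTree S p) (b : PreTree S q) (c : PreTree S r) :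
    (∑ T : TClass S k, if F k T.out then graftCount a b T.out * graftCount T.out c s else 0)
      = (Finset.univ.filter fun vw : Fin (m+1) × Fin (m+1) =>
          (vw.1 ≠ 0 ∧ IsoAbove c s vw.1) ∧ (vw.2 ≠ 0 ∧ vw.2 ≠ vw.1 ∧ desc s vw.1 vw.2 ∧
            IsoBelow a s vw.2 ∧ MidIso b s vw.1 vw.2)).card := by
  have step1 : ∀ T : TClass S k,
      (if F k T.out then graftCount a b T.out * graftCount T.out c s else 0)
      = ∑ v : Fin (m+1), (if F k T.out ∧ (v ≠ 0 ∧ IsoBelow T.out s v ∧ IsoAbove c s v)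
          then graftCount a b T.out else 0) := by
    intro T
    by_cases hF : F k T.out
    · rw [if_pos hF,
        show graftCount T.out c s = ∑ v : Fin (m+1),
          (if v ≠ 0 ∧ IsoBelow T.out s v ∧ IsoAbove c s v then 1 else 0) from
          Finset.card_filter _ _,
        Finset.mul_sum]
      apply Finset.sum_congr rfl
      intro v _
      by_cases hP : v ≠ 0 ∧ IsoBelow T.out s v ∧ IsoAbove c s v
      · rw [if_pos hP, if_pos ⟨hF, hP⟩, mul_one]
      · rw [if_neg hP, if_neg (fun hh => hP hh.2), mul_zero]
    · rw [if_neg hF, eq_comm]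
      apply Finset.sum_eq_zero
      intro v _
      rw [if_neg (fun hh => hF hh.1)]
  rw [Finset.sum_congr rfl (fun T _ => step1 T), Finset.sum_comm]
  have step4 : ∀ v : Fin (m+1),
      (∑ T : TClass S k, if F k T.out ∧ (v ≠ 0 ∧ IsoBelow T.out s v ∧ IsoAbove c s v)
          then graftCount a b T.out else 0)
      = (if v ≠ 0 ∧ IsoAbove c s v then (Finset.univ.filter fun w =>
          w ≠ 0 ∧ w ≠ v ∧ desc s v w ∧ IsoBelow a s w ∧ MidIso b s v w).card else 0) := by
    intro v
    by_cases hC : v ≠ 0 ∧ IsoAbove c s v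
    · rw [if_pos hC]
      obtain ⟨hv, hIA⟩ := hC
      have hcong : ∀ T : TClass S k,
          (if F k T.out ∧ (v ≠ 0 ∧ IsoBelow T.out s v ∧ IsoAbove c s v)
            then graftCount a b T.out else 0)
          = (if F k T.out ∧ IsoBelow T.out s v then graftCount a b T.out else 0) := by
        intro T
        refine if_congr (and_congr_right fun _ =>
          ⟨fun h => h.2.1, fun h => ⟨hv, h, hIA⟩⟩) rfl rfl
      rw [Finset.sum_congr rfl (fun T _ => hcong T)]
      refine key_sum F hIso (fun T => IsoBelow T s v) (fun T => graftCount a b T) _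
        ?huniq ?hinv ?hgc ?hex
      case huniq =>
        intro T T' h h'
        obtain ⟨f, h1, h2, h3, h4, h5⟩ := h
        obtain ⟨f', h1', h2', h3', h4', h5'⟩ := h'
        exact rel_of_same h1 h3 h4 h5 h1' h3' h4' h5' (h2.trans h2'.symm)
      case hinv => exact fun T T' hrel h => isoBelow_of_rel hrel h
      case hgc => exact fun T h => transA s a b hv T h
      case hex =>
        intro hpos
        rw [Finset.card_pos] at hpos
        obtain ⟨w, hw⟩ := hpos
        rw [Finset.mem_filter] at hw
        obtain ⟨-, h1, h2, h3, h4, h5⟩ := hw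
        exact exA hk F hBelow s hs a b hv h3 h4 h5
    · rw [if_neg hC]
      apply Finset.sum_eq_zero
      intro T _
      rw [if_neg (fun hh => hC ⟨hh.2.1, hh.2.2.2⟩)]
  rw [Finset.sum_congr rfl (fun v _ => step4 v), Finset.card_filter,
    Fintype.sum_prod_type]
  apply Finset.sum_congr rfl
  intro v _
  by_cases hC : v ≠ 0 ∧ IsoAbove c s v
  · rw [if_pos hC, Finset.card_filter]
    apply Finset.sum_congr rfl
    intro w _
    by_cases hP : w ≠ 0 ∧ w ≠ v ∧ desc s v w ∧ IsoBelow a s w ∧ MidIso b s v w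
    · rw [if_pos hP, if_pos (show ((v,w).1 ≠ 0 ∧ IsoAbove c s (v,w).1) ∧ ((v,w).2 ≠ 0 ∧
        (v,w).2 ≠ (v,w).1 ∧ desc s (v,w).1 (v,w).2 ∧ IsoBelow a s (v,w).2 ∧
        MidIso b s (v,w).1 (v,w).2) from ⟨hC, hP⟩)]
    · rw [if_neg hP, if_neg (fun hh => hP hh.2)]
  · rw [if_neg hC, eq_comm]
    apply Finset.sum_eq_zero
    intro w _
    rw [if_neg (fun hh => hC hh.1)]

lemma claimB {m p q r k : ℕ} (hk : k + 1 = (q + 1) + (r + 1))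
    (F : ∀ n : ℕ, PreTree S n → Prop)
    (hIso : ∀ (n : ℕ) (t t' : PreTree S n), treeRel t t' → F n t → F n t')
    (hAbove : ∀ (n : ℕ) (t : PreTree S n), F n t → ∀ (q' : ℕ) (b' : PreTree S q')
      (v : Fin (n+1)), v ≠ 0 → IsoAbove b' t v → F q' b')
    (s : PreTree S m) (hs : F m s)
    (a : PreTree S p) (b : PreTree S q) (c : PreTree S r) :
    (∑ T : TClass S k, if F k T.out then graftCount b c T.out * graftCount a T.out s else 0)
      = (Finset.univ.filter fun vw : Fin (m+1) × Fin (m+1) =>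
          (vw.2 ≠ 0 ∧ IsoBelow a s vw.2) ∧ (vw.1 ≠ 0 ∧ ¬ desc s vw.2 vw.1 ∧
            MidIso b s vw.1 vw.2 ∧ OutIso c s vw.1 vw.2)).card := by
  have step1 : ∀ T : TClass S k,
      (if F k T.out then graftCount b c T.out * graftCount a T.out s else 0)
      = ∑ w : Fin (m+1), (if F k T.out ∧ (w ≠ 0 ∧ IsoBelow a s w ∧ IsoAbove T.out s w)
          then graftCount b c T.out else 0) := by
    intro T
    by_cases hF : F k T.out
    · rw [if_pos hF,
        show graftCount a T.out s = ∑ w : Fin (m+1),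
          (if w ≠ 0 ∧ IsoBelow a s w ∧ IsoAbove T.out s w then 1 else 0) from
          Finset.card_filter _ _,
        Finset.mul_sum]
      apply Finset.sum_congr rfl
      intro w _
      by_cases hP : w ≠ 0 ∧ IsoBelow a s w ∧ IsoAbove T.out s w
      · rw [if_pos hP, if_pos ⟨hF, hP⟩, mul_one]
      · rw [if_neg hP, if_neg (fun hh => hP hh.2), mul_zero]
    · rw [if_neg hF, eq_comm]
      apply Finset.sum_eq_zero
      intro w _
      rw [if_neg (fun hh => hF hh.1)]
  rw [Finset.sum_congr rfl (fun T _ => step1 T), Finset.sum_comm]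
  have step4 : ∀ w : Fin (m+1),
      (∑ T : TClass S k, if F k T.out ∧ (w ≠ 0 ∧ IsoBelow a s w ∧ IsoAbove T.out s w)
          then graftCount b c T.out else 0)
      = (if w ≠ 0 ∧ IsoBelow a s w then (Finset.univ.filter fun v =>
          v ≠ 0 ∧ ¬ desc s w v ∧ MidIso b s v w ∧ OutIso c s v w).card else 0) := by
    intro w
    by_cases hC : w ≠ 0 ∧ IsoBelow a s w
    · rw [if_pos hC]
      obtain ⟨hw, hIB⟩ := hC
      have hcong : ∀ T : TClass S k,
          (if F k T.out ∧ (w ≠ 0 ∧ IsoBelow a s w ∧ IsoAbove T.out s w)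
            then graftCount b c T.out else 0)
          = (if F k T.out ∧ IsoAbove T.out s w then graftCount b c T.out else 0) := by
        intro T
        refine if_congr (and_congr_right fun _ =>
          ⟨fun h => h.2.2, fun h => ⟨hw, hIB, h⟩⟩) rfl rfl
      rw [Finset.sum_congr rfl (fun T _ => hcong T)]
      refine key_sum F hIso (fun T => IsoAbove T s w) (fun T => graftCount b c T) _
        ?huniq ?hinv ?hgc ?hex
      case huniq =>
        intro T T' h h'
        obtain ⟨f, h1, h2, h3, h4, h5⟩ := h
        obtain ⟨f', h1', h2', h3', h4', h5'⟩ := h'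
        exact rel_of_same h1 h3 h4 h5 h1' h3' h4' h5' (h2.trans h2'.symm)
      case hinv => exact fun T T' hrel h => isoAbove_of_rel hrel h
      case hgc => exact fun T h => transB s b c hw T h
      case hex =>
        intro hpos
        rw [Finset.card_pos] at hpos
        obtain ⟨v, hv⟩ := hpos
        rw [Finset.mem_filter] at hv
        obtain ⟨-, h1, h2, h3, h4⟩ := hv
        exact exB hk F hAbove s hs b c hw h3 h4
    · rw [if_neg hC]
      apply Finset.sum_eq_zero
      intro T _
      rw [if_neg (fun hh => hC ⟨hh.2.1, hh.2.2.1⟩)]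
  rw [Finset.sum_congr rfl (fun w _ => step4 w), Finset.card_filter,
    Fintype.sum_prod_type_right]
  apply Finset.sum_congr rfl
  intro w _
  by_cases hC : w ≠ 0 ∧ IsoBelow a s w
  · rw [if_pos hC, Finset.card_filter]
    apply Finset.sum_congr rfl
    intro v _
    by_cases hP : v ≠ 0 ∧ ¬ desc s w v ∧ MidIso b s v w ∧ OutIso c s v w
    · rw [if_pos hP, if_pos (show (((v,w) : Fin (m+1) × Fin (m+1)).2 ≠ 0 ∧
        IsoBelow a s ((v,w) : Fin (m+1) × Fin (m+1)).2) ∧ ((v,w).1 ≠ 0 ∧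
        ¬ desc s ((v,w) : Fin (m+1) × Fin (m+1)).2 (v,w).1 ∧
        MidIso b s (v,w).1 ((v,w) : Fin (m+1) × Fin (m+1)).2 ∧
        OutIso c s (v,w).1 ((v,w) : Fin (m+1) × Fin (m+1)).2) from ⟨hC, hP⟩)]
    · rw [if_neg hP, if_neg (fun hh => hP hh.2)]
  · rw [if_neg hC, eq_comm]
    apply Finset.sum_eq_zero
    intro v _
    rw [if_neg (fun hh => hC hh.1)]

end Claims
section Final
open Classical Function Finset

variable {S : Type} [Fintype S] [DecidableEq S]

lemma out_iff_above {r m : ℕ} (c : PreTree S r) (s : PreTree S m) {v w : Fin (m+1)}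
    (hd : desc s v w) : OutIso c s v w ↔ IsoAbove c s v := by
  rw [isoAbove_eq_isoOn]
  exact isoOn_congr _ _ _ (fun j =>
    ⟨fun h => h.1, fun h => ⟨h, fun hh => h (desc_trans hd hh)⟩⟩)

lemma mid_iff_below {q m : ℕ} (b : PreTree S q) (s : PreTree S m) {v w : Fin (m+1)}
    (h1 : ¬ desc s v w) (h2 : ¬ desc s w v) : MidIso b s v w ↔ IsoBelow b s v := by
  rw [isoBelow_eq_isoOn]
  exact isoOn_congr _ _ _ (fun j =>
    ⟨fun h => h.1, fun h => ⟨h, fun hh => (desc_comparable h hh).elim h1 h2⟩⟩)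

lemma out_symm {r m : ℕ} (c : PreTree S r) (s : PreTree S m) {v w : Fin (m+1)} :
    OutIso c s v w ↔ OutIso c s w v :=
  isoOn_congr _ _ _ (fun j => and_comm)

lemma QBsplit {m p q r : ℕ} (s : PreTree S m) (a : PreTree S p) (b : PreTree S q)
    (c : PreTree S r) :
    (Finset.univ.filter fun vw : Fin (m+1) × Fin (m+1) =>
      (vw.2 ≠ 0 ∧ IsoBelow a s vw.2) ∧ (vw.1 ≠ 0 ∧ ¬ desc s vw.2 vw.1 ∧
        MidIso b s vw.1 vw.2 ∧ OutIso c s vw.1 vw.2)).card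
    = (Finset.univ.filter fun vw : Fin (m+1) × Fin (m+1) =>
        (vw.1 ≠ 0 ∧ IsoAbove c s vw.1) ∧ (vw.2 ≠ 0 ∧ vw.2 ≠ vw.1 ∧ desc s vw.1 vw.2 ∧
          IsoBelow a s vw.2 ∧ MidIso b s vw.1 vw.2)).card
      + (Finset.univ.filter fun vw : Fin (m+1) × Fin (m+1) =>
          vw.1 ≠ 0 ∧ vw.2 ≠ 0 ∧ ¬ desc s vw.1 vw.2 ∧ ¬ desc s vw.2 vw.1 ∧
          IsoBelow a s vw.2 ∧ IsoBelow b s vw.1 ∧ OutIso c s vw.1 vw.2).card := by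
  have hdisj : Disjoint (Finset.univ.filter fun vw : Fin (m+1) × Fin (m+1) =>
        (vw.1 ≠ 0 ∧ IsoAbove c s vw.1) ∧ (vw.2 ≠ 0 ∧ vw.2 ≠ vw.1 ∧ desc s vw.1 vw.2 ∧
          IsoBelow a s vw.2 ∧ MidIso b s vw.1 vw.2))
      (Finset.univ.filter fun vw : Fin (m+1) × Fin (m+1) =>
          vw.1 ≠ 0 ∧ vw.2 ≠ 0 ∧ ¬ desc s vw.1 vw.2 ∧ ¬ desc s vw.2 vw.1 ∧
          IsoBelow a s vw.2 ∧ IsoBelow b s vw.1 ∧ OutIso c s vw.1 vw.2) := by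
    rw [Finset.disjoint_left]
    intro vw h1 h2
    rw [Finset.mem_filter] at h1 h2
    exact h2.2.2.2.1 h1.2.2.2.2.1
  rw [← Finset.card_union_of_disjoint hdisj]
  congr 1
  ext ⟨v, w⟩
  simp only [Finset.mem_filter, Finset.mem_union, Finset.mem_univ, true_and]
  constructor
  · rintro ⟨⟨hw0, hba⟩, hv0, hnwv, hmid, hout⟩
    by_cases hd : desc s v w
    · left
      have hwv : w ≠ v := fun hh => hnwv (by rw [hh]; exact desc_self s v)
      exact ⟨⟨hv0, (out_iff_above c s hd).mp hout⟩, hw0, hwv, hd, hba, hmid⟩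
    · right
      exact ⟨hv0, hw0, hd, hnwv, hba, (mid_iff_below b s hd hnwv).mp hmid, hout⟩
  · rintro (⟨⟨hv0, hIA⟩, hw0, hwv, hd, hba, hmid⟩ | ⟨hv0, hw0, hnvw, hnwv, hba, hbb, hout⟩)
    · have hnwv : ¬ desc s w v := fun hh => hwv (desc_antisymm hh hd)
      exact ⟨⟨hw0, hba⟩, hv0, hnwv, hmid, (out_iff_above c s hd).mpr hIA⟩
    · exact ⟨⟨hw0, hba⟩, hv0, hnwv, (mid_iff_below b s hnvw hnwv).mpr hbb, hout⟩

lemma QSswap {m p q r : ℕ} (s : PreTree S m) (a : PreTree S p) (b : PreTree S q)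
    (c : PreTree S r) :
    (Finset.univ.filter fun vw : Fin (m+1) × Fin (m+1) =>
        vw.1 ≠ 0 ∧ vw.2 ≠ 0 ∧ ¬ desc s vw.1 vw.2 ∧ ¬ desc s vw.2 vw.1 ∧
        IsoBelow a s vw.2 ∧ IsoBelow b s vw.1 ∧ OutIso c s vw.1 vw.2).card
    = (Finset.univ.filter fun vw : Fin (m+1) × Fin (m+1) =>
        vw.1 ≠ 0 ∧ vw.2 ≠ 0 ∧ ¬ desc s vw.1 vw.2 ∧ ¬ desc s vw.2 vw.1 ∧
        IsoBelow b s vw.2 ∧ IsoBelow a s vw.1 ∧ OutIso c s vw.1 vw.2).card := by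
  apply Finset.card_bij (fun vw _ => (vw.2, vw.1))
  · rintro ⟨v, w⟩ h
    rw [Finset.mem_filter] at h ⊢
    obtain ⟨-, h1, h2, h3, h4, h5, h6, h7⟩ := h
    exact ⟨Finset.mem_univ _, h2, h1, h4, h3, h6, h5, (out_symm c s).mp h7⟩
  · rintro ⟨v, w⟩ _ ⟨v', w'⟩ _ hh
    simpa [Prod.ext_iff, and_comm] using hh
  · rintro ⟨v, w⟩ h
    rw [Finset.mem_filter] at h
    obtain ⟨-, h1, h2, h3, h4, h5, h6, h7⟩ := h
    exact ⟨(w, v), Finset.mem_filter.mpr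
      ⟨Finset.mem_univ _, h2, h1, h4, h3, h6, h5, (out_symm c s).mp h7⟩, rfl⟩

lemma castlem {k : ℕ} (P : TClass S k → Prop) (f g : TClass S k → ℕ) :
    (∑ T : TClass S k, if P T then (f T : ℤ) * (g T : ℤ) else 0)
      = ((∑ T : TClass S k, if P T then f T * g T else 0 : ℕ) : ℤ) := by
  rw [Nat.cast_sum]
  refine Finset.sum_congr rfl fun T _ => ?_
  split_ifs <;> push_cast <;> ring

end Final
open Classical in
/-- Let `F` be a collection of finite `S`-colored posets whose Hasse
diagrams are rooted trees, closed under isomorphism and under taking the convex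
sub-posets `P_e(t)`, `R_e(t)` obtained by cutting an edge `e` of `t ∈ F`.  For
connected `a, b ∈ F` put `δ_a ▷ δ_b = ∑_{t ∈ F} n(a,b,t) δ_t` with
`n(a,b,t) = graftCount a b t`.  Then the span of `{δ_t : t ∈ F}` is stable under `▷`
(by construction), and `▷` satisfies the left pre-Lie identity on it.  Stated
coefficientwise at an arbitrary `s ∈ F`: the coefficient of `δ_s` in
`(a ▷ b) ▷ c - a ▷ (b ▷ c)` is symmetric in `a` and `b`, where the inner sums run
over isomorphism classes of trees belonging to `F`. -/
theorem stmt14 (S : Type) [Fintype S] [DecidableEq S]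
    (F : ∀ m : ℕ, PreTree S m → Prop)
    (hIso : ∀ (m : ℕ) (t t' : PreTree S m), treeRel t t' → F m t → F m t')
    (hBelow : ∀ (m : ℕ) (t : PreTree S m), F m t → ∀ (p : ℕ) (a : PreTree S p)
      (v : Fin (m+1)), v ≠ 0 → IsoBelow a t v → F p a)
    (hAbove : ∀ (m : ℕ) (t : PreTree S m), F m t → ∀ (q : ℕ) (b : PreTree S q)
      (v : Fin (m+1)), v ≠ 0 → IsoAbove b t v → F q b)
    {p q r m : ℕ} (a : PreTree S p) (b : PreTree S q) (c : PreTree S r)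
    (ha : F p a) (hb : F q b) (hc : F r c)
    (s : PreTree S m) (hs : F m s) :
    ((∑ T : TClass S (p + q + 1), if F _ T.out then
        (graftCount a b T.out * graftCount T.out c s : ℤ) else 0)
      - ∑ T : TClass S (q + r + 1), if F _ T.out then
        (graftCount b c T.out * graftCount a T.out s : ℤ) else 0)
    =
    ((∑ T : TClass S (p + q + 1), if F _ T.out then
        (graftCount b a T.out * graftCount T.out c s : ℤ) else 0)
      - ∑ T : TClass S (p + r + 1), if F _ T.out then
        (graftCount a c T.out * graftCount b T.out s : ℤ) else 0) := by

  classical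
  have e1 := claimA (k := p + q + 1) (by omega) F hIso hBelow s hs a b c
  have e2 := claimB (k := q + r + 1) (by omega) F hIso hAbove s hs a b c
  have e3 := claimA (k := p + q + 1) (by omega) F hIso hBelow s hs b a c
  have e4 := claimB (k := p + r + 1) (by omega) F hIso hAbove s hs b a c
  rw [castlem (fun T : TClass S (p+q+1) => F _ T.out)
      (fun T => graftCount a b T.out) (fun T => graftCount T.out c s),
    castlem (fun T : TClass S (q+r+1) => F _ T.out)
      (fun T => graftCount b c T.out) (fun T => graftCount a T.out s),
    castlem (fun T : TClass S (p+q+1) => F _ T.out)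
      (fun T => graftCount b a T.out) (fun T => graftCount T.out c s),
    castlem (fun T : TClass S (p+r+1) => F _ T.out)
      (fun T => graftCount a c T.out) (fun T => graftCount b T.out s),
    e1, e2, e3, e4, QBsplit s a b c, QBsplit s b a c, QSswap s a b c]
  push_cast
  ring
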